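/- Let A be a ring, 0 → I₁ → B₁' → B₁ → 0 a square-zero A-algebra extension, and B₂ an A-algebra with Tor₁^A(B₁, B₂) = 0. Then applying −⊗_A B₂ yields a square-zero extension 0 → I₁⊗_A B₂ → B₁'⊗_A B₂ → B₁⊗_A B₂ → 0 of A-algebras; in particular the sequence remains exact and the ideal I₁⊗_A B₂ squares to zero in B₁'⊗_A B₂. -/

import Mathlib

/-!
STATEMENT 13: if `0 → I₁ → B₁' → B₁ → 0` is a square-zero `A`-algebra extension
(given by a surjective `A`-algebra map `π : B₁' → B₁` with square-zero kernel)
and `B₂` is an `A`-algebra with `Tor₁^A(B₁, B₂) = 0`, then applying `— ⊗_A B₂`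
yields a square-zero extension
`0 → I₁ ⊗_A B₂ → B₁' ⊗_A B₂ → B₁ ⊗_A B₂ → 0`: the sequence is exact
(in particular `I₁ ⊗_A B₂ → B₁' ⊗_A B₂` is injective) and the kernel ideal of
`B₁' ⊗_A B₂ → B₁ ⊗_A B₂` squares to zero.
-/

open TensorProduct CategoryTheory CategoryTheory.Limits

universe u

section Stmt13Aux

open MonoidalCategory

noncomputable instance tensoringLeftPFC {A : Type u} [CommRing A] (M : ModuleCat.{u} A) :
    PreservesFiniteColimits ((tensoringLeft (ModuleCat.{u} A)).obj M) := by
  have : PreservesColimits (tensorLeft M) := (ihom.adjunction M).leftAdjoint_preservesColimits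
  exact PreservesColimits.preservesFiniteColimits (tensorLeft M)

/-- If `Tor₁^A(P, Q) = 0` and `0 → M → N → P → 0` is a short exact sequence of `A`-modules,
then `M ⊗ Q → N ⊗ Q` is injective. -/
theorem aux_rTensor_injective {A M N P Q : Type u} [CommRing A]
    [AddCommGroup M] [Module A M] [AddCommGroup N] [Module A N]
    [AddCommGroup P] [Module A P] [AddCommGroup Q] [Module A Q]
    (f : M →ₗ[A] N) (g : N →ₗ[A] P)
    (hf : Function.Injective f) (hg : Function.Surjective g)
    (hfg : Function.Exact f g)
    (hTor : IsZero (((Tor (ModuleCat.{u} A) 1).obj (ModuleCat.of A P)).obj (ModuleCat.of A Q))) :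
    Function.Injective (f.rTensor Q) := by
  classical
  set C := ModuleCat.{u} A
  let R : ProjectiveResolution (ModuleCat.of A Q) := projectiveResolution _
  haveI : ∀ n : ℕ, Module.Flat A (R.complex.X n) := by
    intro n
    haveI : Projective (ModuleCat.of A (R.complex.X n)) := R.projective n
    haveI : Module.Projective A (R.complex.X n) := (IsProjective.iff_projective _).mpr this
    infer_instance
  let α := (tensoringLeft C).map (ModuleCat.ofHom f : ModuleCat.of A M ⟶ ModuleCat.of A N)
  let β := (tensoringLeft C).map (ModuleCat.ofHom g : ModuleCat.of A N ⟶ ModuleCat.of A P)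
  have hgf : ∀ x, g (f x) = 0 := fun x => hfg.apply_apply_eq_zero x
  let Sc : ShortComplex (HomologicalComplex C (ComplexShape.down ℕ)) :=
    ShortComplex.mk ((NatTrans.mapHomologicalComplex α _).app R.complex)
      ((NatTrans.mapHomologicalComplex β _).app R.complex) (by
        refine HomologicalComplex.hom_ext _ _ fun n => ?_
        refine ModuleCat.hom_ext (TensorProduct.ext' fun m y => ?_)
        show g (f m) ⊗ₜ[A] y = 0
        rw [hgf, zero_tmul])
  have hSc : Sc.ShortExact := by
    apply HomologicalComplex.shortExact_of_degreewise_shortExact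
    intro n
    refine { exact := ?_, mono_f := ?_, epi_g := ?_ }
    · rw [ShortComplex.moduleCat_exact_iff]
      intro x hx
      exact (rTensor_exact (R.complex.X n) hfg hg x).mp (by exact hx)
    · rw [ModuleCat.mono_iff_injective]
      exact Module.Flat.rTensor_preserves_injective_linearMap (M := R.complex.X n) f hf
    · rw [ModuleCat.epi_iff_surjective]
      exact LinearMap.rTensor_surjective _ hg
  have h10 : (ComplexShape.down ℕ).Rel 1 0 := by simp
  have hZ : IsZero (Sc.X₃.homology 1) :=
    hTor.of_iso (R.isoLeftDerivedObj ((tensoringLeft C).obj (ModuleCat.of A P)) 1).symm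
  have hδ : hSc.δ 1 0 h10 = 0 := hZ.eq_of_src _ _
  have hmono0 : Mono (HomologicalComplex.homologyMap Sc.f 0) :=
    (hSc.homology_exact₁ 1 0 h10).mono_g hδ
  -- comparison maps to X ⊗ Q
  let e : ∀ X : C, ((((tensoringLeft C).obj X).mapHomologicalComplex
      (ComplexShape.down ℕ)).obj R.complex).homology 0 ⟶ ((tensoringLeft C).obj X).obj (ModuleCat.of A Q) :=
    fun X => (ChainComplex.isoHomologyι₀ _).hom ≫ R.fromLeftDerivedZero' ((tensoringLeft C).obj X)
  haveI : ∀ X : C, IsIso (e X) := fun X => by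
    dsimp only [e]
    infer_instance
  have nat : ∀ (X Y : C) (φ : X ⟶ Y),
      HomologicalComplex.homologyMap
          ((NatTrans.mapHomologicalComplex ((tensoringLeft C).map φ) (ComplexShape.down ℕ)).app R.complex) 0 ≫ e Y =
        e X ≫ ((tensoringLeft C).map φ).app (ModuleCat.of A Q) := by
    intro X Y φ
    dsimp only [e]
    have h1 : HomologicalComplex.homologyMap
        ((NatTrans.mapHomologicalComplex ((tensoringLeft C).map φ) (ComplexShape.down ℕ)).app R.complex) 0 ≫
          (ChainComplex.isoHomologyι₀ _).hom =
        (ChainComplex.isoHomologyι₀ _).hom ≫ HomologicalComplex.opcyclesMap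
          ((NatTrans.mapHomologicalComplex ((tensoringLeft C).map φ) (ComplexShape.down ℕ)).app R.complex) 0 := by
      simp only [HomologicalComplex.isoHomologyι_hom]
      exact HomologicalComplex.homologyι_naturality _ 0
    rw [reassoc_of% h1, Category.assoc, cancel_epi ((ChainComplex.isoHomologyι₀
      ((((tensoringLeft C).obj X).mapHomologicalComplex (ComplexShape.down ℕ)).obj R.complex)).hom)]
    rw [← cancel_epi (HomologicalComplex.pOpcycles _ 0)]
    rw [HomologicalComplex.p_opcyclesMap_assoc]
    simp only [Functor.mapHomologicalComplex_map_f, NatTrans.mapHomologicalComplex_app_f,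
      ProjectiveResolution.pOpcycles_comp_fromLeftDerivedZero',
      ProjectiveResolution.pOpcycles_comp_fromLeftDerivedZero'_assoc]
    exact (((tensoringLeft C).map φ).naturality (R.π.f 0)).symm
  have hsq := nat _ _ (ModuleCat.ofHom f)
  have hmono0' : Mono (HomologicalComplex.homologyMap
      ((NatTrans.mapHomologicalComplex ((tensoringLeft C).map
        (ModuleCat.ofHom f : ModuleCat.of A M ⟶ ModuleCat.of A N)) (ComplexShape.down ℕ)).app R.complex) 0) := hmono0
  have hcomp : Mono (HomologicalComplex.homologyMap
      ((NatTrans.mapHomologicalComplex ((tensoringLeft C).map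
        (ModuleCat.ofHom f : ModuleCat.of A M ⟶ ModuleCat.of A N)) (ComplexShape.down ℕ)).app R.complex) 0 ≫
      e (ModuleCat.of A N)) := mono_comp _ _
  rw [hsq] at hcomp
  have hmono : Mono (((tensoringLeft C).map (ModuleCat.ofHom f :
      ModuleCat.of A M ⟶ ModuleCat.of A N)).app (ModuleCat.of A Q)) := by
    have heq : ((tensoringLeft C).map (ModuleCat.ofHom f :
        ModuleCat.of A M ⟶ ModuleCat.of A N)).app (ModuleCat.of A Q) =
        inv (e (ModuleCat.of A M)) ≫ (e (ModuleCat.of A M) ≫ ((tensoringLeft C).map (ModuleCat.ofHom f :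
          ModuleCat.of A M ⟶ ModuleCat.of A N)).app (ModuleCat.of A Q)) := by simp
    rw [heq]
    infer_instance
  exact (ModuleCat.mono_iff_injective (((tensoringLeft C).map (ModuleCat.ofHom f :
      ModuleCat.of A M ⟶ ModuleCat.of A N)).app (ModuleCat.of A Q))).mp hmono

end Stmt13Aux

theorem stmt13 {A B₁' B₁ B₂ : Type u}
    [CommRing A] [CommRing B₁'] [CommRing B₁] [CommRing B₂]
    [Algebra A B₁'] [Algebra A B₁] [Algebra A B₂]
    (π : B₁' →ₐ[A] B₁) (hπ : Function.Surjective π)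
    (hsq : (RingHom.ker (π : B₁' →+* B₁)) ^ 2 = ⊥)
    (hTor : IsZero (((Tor (ModuleCat.{u} A) 1).obj
      (ModuleCat.of A B₁)).obj (ModuleCat.of A B₂))) :
    Function.Injective
      (LinearMap.rTensor B₂
        (((RingHom.ker (π : B₁' →+* B₁)).restrictScalars A).subtype)) ∧
    Function.Surjective (Algebra.TensorProduct.map π (AlgHom.id A B₂)) ∧
    Function.Exact
      (LinearMap.rTensor B₂
        (((RingHom.ker (π : B₁' →+* B₁)).restrictScalars A).subtype))
      (Algebra.TensorProduct.map π (AlgHom.id A B₂)) ∧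
    (RingHom.ker ((Algebra.TensorProduct.map π (AlgHom.id A B₂)) :
        (B₁' ⊗[A] B₂) →+* (B₁ ⊗[A] B₂))) ^ 2 = ⊥ := by
  set ι := ((RingHom.ker (π : B₁' →+* B₁)).restrictScalars A).subtype
  have hexact0 : Function.Exact ι π.toLinearMap := by
    intro y
    constructor
    · intro hy; exact ⟨⟨y, hy⟩, rfl⟩
    · rintro ⟨⟨x, hx⟩, rfl⟩; exact hx
  have hinj : Function.Injective (LinearMap.rTensor B₂ ι) :=
    aux_rTensor_injective ι π.toLinearMap (Submodule.injective_subtype _) hπ hexact0 hTor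
  have hsurj : Function.Surjective (Algebra.TensorProduct.map π (AlgHom.id A B₂)) := by
    have := LinearMap.rTensor_surjective (Q := B₂) (g := π.toLinearMap) hπ
    exact this
  have hex : Function.Exact (LinearMap.rTensor B₂ ι) (Algebra.TensorProduct.map π (AlgHom.id A B₂)) := by
    have := rTensor_exact (N := B₁') B₂ hexact0 hπ
    exact this
  refine ⟨hinj, hsurj, hex, ?_⟩
  rw [pow_two]
  refine le_antisymm (Ideal.mul_le.mpr fun x hx y hy => ?_) bot_le
  rw [Ideal.mem_bot]
  rw [RingHom.mem_ker] at hx hy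
  obtain ⟨u, rfl⟩ := (hex x).mp hx
  obtain ⟨v, rfl⟩ := (hex y).mp hy
  clear hx hy
  induction u using TensorProduct.induction_on with
  | zero => rw [map_zero, zero_mul]
  | tmul i b =>
      induction v using TensorProduct.induction_on with
      | zero => rw [map_zero, mul_zero]
      | tmul j c =>
          show ((i : B₁') ⊗ₜ[A] b) * ((j : B₁') ⊗ₜ[A] c) = 0
          rw [Algebra.TensorProduct.tmul_mul_tmul]
          have : (i : B₁') * (j : B₁') = 0 := by
            have := Ideal.mul_mem_mul i.2 j.2
            rw [← pow_two, hsq, Ideal.mem_bot] at this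
            exact this
          rw [this, zero_tmul]
      | add v₁ v₂ h₁ h₂ => rw [map_add, mul_add, h₁, h₂, add_zero]
  | add u₁ u₂ h₁ h₂ => rw [map_add, add_mul, h₁, h₂, add_zero]
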